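/- (DILAND with consistent estimates.) Let (P_k)_{k≥0} be N×N real matrices, each entrywise nonnegative with all row sums at most 1, converging entrywise to a matrix P whose maximum row sum is γ < 1, and let (c_k)_{k≥0} in ℝ^{N×m} converge to c. Let (α_k)_{k≥0} satisfy α_k ∈ (0,1] and ∑_k α_k = ∞. Then for every x_0 ∈ ℝ^{N×m}, the iterates x_{k+1} = (1 − α_k) x_k + α_k (P_k x_k + c_k) converge to x* = (I − P)^{-1} c as k → ∞. -/

import Mathlib

open Filter

/-- Scalar recursion lemma: `u (k+1) ≤ (1 - β k) * u k + β k * ε k` eventually,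
with `β ∈ [0,1]`, `∑ β = ∞`, `ε → 0`, `u ≥ 0` implies `u → 0`. -/
lemma diland_scalar_lemma (u β ε : ℕ → ℝ) (K₀ : ℕ)
    (hu : ∀ k, 0 ≤ u k)
    (hβ0 : ∀ k, 0 ≤ β k) (hβ1 : ∀ k, β k ≤ 1)
    (hβdiv : Tendsto (fun n => ∑ k ∈ Finset.range n, β k) atTop atTop)
    (hε : Tendsto ε atTop (nhds 0))
    (hrec : ∀ k, K₀ ≤ k → u (k + 1) ≤ (1 - β k) * u k + β k * ε k) :
    Tendsto u atTop (nhds 0) := by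
  rw [Metric.tendsto_atTop]
  intro δ hδ
  -- pick K ≥ K₀ with ε k ≤ δ/2 for k ≥ K
  obtain ⟨K₁, hK₁⟩ := (Metric.tendsto_atTop.mp hε) (δ / 2) (by linarith)
  set K := max K₀ K₁ with hK
  have hεle : ∀ k, K ≤ k → ε k ≤ δ / 2 := by
    intro k hk
    have := hK₁ k (le_trans (le_max_right _ _) hk)
    rw [Real.dist_eq, sub_zero] at this
    exact le_of_lt (lt_of_abs_lt this)
  set M : ℝ := max (u K - δ / 2) 0 with hM
  have hM0 : 0 ≤ M := le_max_right _ _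
  set q : ℕ → ℝ := fun n => ∏ k ∈ Finset.Ico K n, (1 - β k) with hq
  have hq0 : ∀ n, 0 ≤ q n := fun n =>
    Finset.prod_nonneg fun k _ => by linarith [hβ1 k]
  -- main inductive bound
  have hmain : ∀ n, K ≤ n → u n ≤ δ / 2 + q n * M := by
    intro n hn
    induction n, hn using Nat.le_induction with
    | base =>
        have : q K = 1 := by simp [hq]
        rw [this, one_mul]
        have : u K - δ / 2 ≤ M := le_max_left _ _
        linarith
    | succ n hn ih =>
        have hqsucc : q (n + 1) = q n * (1 - β n) := by
          simp only [hq]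
          rw [Finset.prod_Ico_succ_top hn]
        have h1 := hrec n (le_trans (le_max_left _ _) hn)
        have h2 := hεle n hn
        have h3 : 0 ≤ 1 - β n := by linarith [hβ1 n]
        have h4 := hβ0 n
        have h5 := hq0 n
        rw [hqsucc]
        nlinarith [mul_le_mul_of_nonneg_left ih h3, mul_le_mul_of_nonneg_left h2 h4]
  -- q → 0
  have hqlim : Tendsto q atTop (nhds 0) := by
    set C : ℝ := ∑ k ∈ Finset.range K, β k with hC
    have hg : Tendsto (fun n => Real.exp (-(∑ k ∈ Finset.range n, β k - C)))
        atTop (nhds 0) := by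
      apply Real.tendsto_exp_atBot.comp
      apply tendsto_neg_atTop_atBot.comp
      exact tendsto_atTop_add_const_right atTop (-C) hβdiv
    refine squeeze_zero' (Eventually.of_forall hq0) ?_ hg
    filter_upwards [eventually_ge_atTop K] with n hn
    have hsum : ∑ k ∈ Finset.Ico K n, β k = ∑ k ∈ Finset.range n, β k - C := by
      rw [hC, Finset.sum_Ico_eq_sub _ hn]
    have hle : q n ≤ Real.exp (-(∑ k ∈ Finset.Ico K n, β k)) := by
      have heq : Real.exp (-(∑ k ∈ Finset.Ico K n, β k))
          = ∏ k ∈ Finset.Ico K n, Real.exp (-β k) := by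
        rw [← Real.exp_sum, Finset.sum_neg_distrib]
      rw [heq]
      apply Finset.prod_le_prod
      · intro k _; linarith [hβ1 k]
      · intro k _
        have := Real.add_one_le_exp (-β k)
        linarith
    rwa [hsum] at hle
  -- conclude
  have hqM : Tendsto (fun n => q n * M) atTop (nhds 0) := by
    simpa using hqlim.mul_const M
  obtain ⟨K₂, hK₂⟩ := (Metric.tendsto_atTop.mp hqM) (δ / 2) (by linarith)
  refine ⟨max K K₂, fun n hn => ?_⟩
  have h1 := hmain n (le_trans (le_max_left _ _) hn)
  have h2 := hK₂ n (le_trans (le_max_right _ _) hn)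
  rw [Real.dist_eq, sub_zero] at h2 ⊢
  rw [abs_of_nonneg (hu n)]
  have := lt_of_abs_lt h2
  linarith

attribute [local instance] Matrix.normedAddCommGroup Matrix.normedSpace

/-- Entrywise sup-norm bound for multiplication by a nonnegative matrix with
row sums at most `t`. -/
lemma diland_mul_norm_le {N m : ℕ} (Q : Matrix (Fin N) (Fin N) ℝ)
    (z : Matrix (Fin N) (Fin m) ℝ) (t : ℝ) (ht : 0 ≤ t)
    (hQ : ∀ i j, 0 ≤ Q i j) (hrow : ∀ i, ∑ j, Q i j ≤ t) :
    ‖Q * z‖ ≤ t * ‖z‖ := by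
  rw [Matrix.norm_le_iff (mul_nonneg ht (norm_nonneg z))]
  intro i j
  rw [Matrix.mul_apply]
  calc ‖∑ l, Q i l * z l j‖ ≤ ∑ l, ‖Q i l * z l j‖ := norm_sum_le _ _
    _ ≤ ∑ l, Q i l * ‖z‖ := by
        apply Finset.sum_le_sum
        intro l _
        rw [norm_mul, Real.norm_of_nonneg (hQ i l)]
        exact mul_le_mul_of_nonneg_left (Matrix.norm_entry_le_entrywise_sup_norm z) (hQ i l)
    _ = (∑ l, Q i l) * ‖z‖ := by rw [Finset.sum_mul]
    _ ≤ t * ‖z‖ := mul_le_mul_of_nonneg_right (hrow i) (norm_nonneg z)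

/-- DILAND with consistent estimates (Theorem 3 of the paper along a sample path):
if the nonnegative substochastic matrices `P_k` converge entrywise to `P` with
maximum row sum `γ < 1`, the vectors `c_k` converge to `c`, and the weights satisfy
the persistence conditions `α_k ∈ (0,1]`, `∑ α_k = ∞`, then the iterates
`x_{k+1} = (1 - α_k) x_k + α_k (P_k x_k + c_k)` converge to `x* = (I - P)⁻¹ c` from
every initial condition. -/
theorem diland_consistent_converges {N m : ℕ}
    (Pk : ℕ → Matrix (Fin N) (Fin N) ℝ) (P : Matrix (Fin N) (Fin N) ℝ)
    (hPk : ∀ k i j, 0 ≤ Pk k i j) (hPkrow : ∀ k i, ∑ j, Pk k i j ≤ 1)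
    (hPlim : Tendsto Pk atTop (nhds P))
    (γ : ℝ) (hrow : ∀ i, ∑ j, P i j ≤ γ) (hγ : γ < 1)
    (ck : ℕ → Matrix (Fin N) (Fin m) ℝ) (c : Matrix (Fin N) (Fin m) ℝ)
    (hclim : Tendsto ck atTop (nhds c))
    (α : ℕ → ℝ) (hα : ∀ k, α k ∈ Set.Ioc (0 : ℝ) 1)
    (hdiv : Tendsto (fun n => ∑ k ∈ Finset.range n, α k) atTop atTop)
    (x : ℕ → Matrix (Fin N) (Fin m) ℝ)
    (hrec : ∀ k, x (k + 1) = (1 - α k) • x k + α k • (Pk k * x k + ck k)) :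
    Tendsto x atTop (nhds (((1 : Matrix (Fin N) (Fin N) ℝ) - P)⁻¹ * c)) := by
  -- parameters
  set γ' : ℝ := max ((1 + γ) / 2) 0 with hγ'
  have hγ'0 : 0 ≤ γ' := le_max_right _ _
  have hγ'1 : γ' < 1 := max_lt (by linarith) one_pos
  have hγγ' : γ < γ' := lt_of_lt_of_le (by linarith) (le_max_left _ _)
  -- entrywise convergence
  have hent : ∀ i j, Tendsto (fun k => Pk k i j) atTop (nhds (P i j)) := by
    intro i j
    have hc : Continuous (fun A : Matrix (Fin N) (Fin N) ℝ => A i j) :=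
      Continuous.matrix_elem continuous_id i j
    exact (hc.tendsto P).comp hPlim
  -- P is nonnegative
  have hP0 : ∀ i j, 0 ≤ P i j := fun i j =>
    ge_of_tendsto (hent i j) (Eventually.of_forall fun k => hPk k i j)
  -- invertibility of 1 - P
  have hdet : IsUnit ((1 : Matrix (Fin N) (Fin N) ℝ) - P).det := by
    rw [isUnit_iff_ne_zero]
    intro hzero
    obtain ⟨v, hv, hveq⟩ := (Matrix.exists_mulVec_eq_zero_iff).mpr hzero
    have hvP : v = P.mulVec v := by
      have := hveq
      rw [Matrix.sub_mulVec, Matrix.one_mulVec, sub_eq_zero] at this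
      exact this
    obtain ⟨i₁, hi₁⟩ := Function.ne_iff.mp hv
    obtain ⟨i₀, -, hi₀⟩ := Finset.exists_max_image Finset.univ (fun i => |v i|)
      ⟨i₁, Finset.mem_univ i₁⟩
    have hpos : 0 < |v i₀| :=
      lt_of_lt_of_le (abs_pos.mpr hi₁) (hi₀ i₁ (Finset.mem_univ i₁))
    have hb : |v i₀| ≤ γ * |v i₀| := by
      have hentry : v i₀ = ∑ j, P i₀ j * v j := by
        conv_lhs => rw [hvP]
        simp [Matrix.mulVec, dotProduct]
      calc |v i₀| = |∑ j, P i₀ j * v j| := by rw [hentry]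
        _ ≤ ∑ j, |P i₀ j * v j| := Finset.abs_sum_le_sum_abs _ _
        _ ≤ ∑ j, P i₀ j * |v i₀| := by
            apply Finset.sum_le_sum
            intro j _
            rw [abs_mul, abs_of_nonneg (hP0 i₀ j)]
            exact mul_le_mul_of_nonneg_left (hi₀ j (Finset.mem_univ j)) (hP0 i₀ j)
        _ = (∑ j, P i₀ j) * |v i₀| := by rw [Finset.sum_mul]
        _ ≤ γ * |v i₀| := mul_le_mul_of_nonneg_right (hrow i₀) (le_of_lt hpos)
    nlinarith
  -- the fixed point
  set xs : Matrix (Fin N) (Fin m) ℝ := ((1 : Matrix (Fin N) (Fin N) ℝ) - P)⁻¹ * c with hxs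
  have hfix : P * xs + c = xs := by
    have h1 : ((1 : Matrix (Fin N) (Fin N) ℝ) - P) * xs = c := by
      rw [hxs, ← Matrix.mul_assoc, Matrix.mul_nonsing_inv _ hdet, Matrix.one_mul]
    rw [Matrix.sub_mul, Matrix.one_mul] at h1
    rw [← h1]; abel
  have hPxs : P * xs = xs - c := eq_sub_of_add_eq hfix
  -- the perturbation d
  set d : ℕ → Matrix (Fin N) (Fin m) ℝ := fun k => (Pk k - P) * xs + (ck k - c) with hd
  have hdlim : Tendsto d atTop (nhds 0) := by
    have h1 : Tendsto (fun k => Pk k - P) atTop (nhds 0) := by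
      simpa using hPlim.sub (tendsto_const_nhds (x := P))
    have hc2 : Continuous (fun A : Matrix (Fin N) (Fin N) ℝ => A * xs) :=
      Continuous.matrix_mul continuous_id continuous_const
    have h2 : Tendsto (fun k => (Pk k - P) * xs) atTop (nhds 0) := by
      have := (hc2.tendsto 0).comp h1
      simpa [Function.comp_def, Matrix.zero_mul] using this
    have h3 : Tendsto (fun k => ck k - c) atTop (nhds 0) := by
      simpa using hclim.sub (tendsto_const_nhds (x := c))
    simpa using h2.add h3
  -- eventually the rows of Pk sum to at most γ'
  have hev : ∀ᶠ k in atTop, ∀ i, ∑ j, Pk k i j ≤ γ' := by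
    rw [eventually_all]
    intro i
    have hsum : Tendsto (fun k => ∑ j, Pk k i j) atTop (nhds (∑ j, P i j)) :=
      tendsto_finset_sum _ fun j _ => hent i j
    have : ∀ᶠ k in atTop, ∑ j, Pk k i j < γ' :=
      hsum.eventually_lt_const (lt_of_le_of_lt (hrow i) hγγ')
    filter_upwards [this] with k hk using le_of_lt hk
  obtain ⟨K₀, hK₀⟩ := eventually_atTop.mp hev
  -- the scalar sequences
  set u : ℕ → ℝ := fun k => ‖x k - xs‖ with hu
  set β : ℕ → ℝ := fun k => α k * (1 - γ') with hβ
  set ε : ℕ → ℝ := fun k => ‖d k‖ / (1 - γ') with hε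
  have hγ'ne : (1 : ℝ) - γ' ≠ 0 := by linarith
  -- the key recursion on the error
  have hkey : ∀ k, x (k + 1) - xs =
      (1 - α k) • (x k - xs) + α k • (Pk k * (x k - xs)) + α k • d k := by
    intro k
    rw [hrec k, hd]
    simp only [Matrix.mul_sub, Matrix.sub_mul, hPxs]
    module
  have hurec : ∀ k, K₀ ≤ k → u (k + 1) ≤ (1 - β k) * u k + β k * ε k := by
    intro k hk
    obtain ⟨hα0, hα1⟩ := hα k
    have hβε : β k * ε k = α k * ‖d k‖ := by
      rw [hβ, hε]; field_simp
    rw [hβε, hβ]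
    show u (k + 1) ≤ (1 - α k * (1 - γ')) * u k + α k * ‖d k‖
    have h1 : u (k + 1) ≤ (1 - α k) * u k + α k * ‖Pk k * (x k - xs)‖
        + α k * ‖d k‖ := by
      rw [hu]
      simp only
      rw [hkey k]
      calc ‖(1 - α k) • (x k - xs) + α k • (Pk k * (x k - xs)) + α k • d k‖
          ≤ ‖(1 - α k) • (x k - xs)‖ + ‖α k • (Pk k * (x k - xs))‖ + ‖α k • d k‖ :=
            norm_add₃_le
        _ = (1 - α k) * ‖x k - xs‖ + α k * ‖Pk k * (x k - xs)‖ + α k * ‖d k‖ := by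
            rw [norm_smul, norm_smul, norm_smul, Real.norm_of_nonneg (by linarith),
              Real.norm_of_nonneg (le_of_lt hα0)]
    have h2 : ‖Pk k * (x k - xs)‖ ≤ γ' * ‖x k - xs‖ :=
      diland_mul_norm_le _ _ γ' hγ'0 (hPk k) (hK₀ k hk)
    have h3 : u k = ‖x k - xs‖ := rfl
    rw [← h3] at h2
    have h4 := mul_le_mul_of_nonneg_left h2 hα0.le
    have hgoal : (1 - α k * (1 - γ')) * u k
        = (1 - α k) * u k + α k * (γ' * u k) := by ring
    linarith
  -- apply the scalar lemma
  have hu0 : Tendsto u atTop (nhds 0) := by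
    apply diland_scalar_lemma u β ε K₀ (fun k => norm_nonneg _)
    · intro k
      exact mul_nonneg (le_of_lt (hα k).1) (by linarith)
    · intro k
      exact mul_le_one₀ (hα k).2 (by linarith) (by linarith)
    · have : (fun n => ∑ k ∈ Finset.range n, β k)
          = fun n => (∑ k ∈ Finset.range n, α k) * (1 - γ') := by
        funext n; rw [Finset.sum_mul]
      rw [this]
      exact hdiv.atTop_mul_const (by linarith)
    · have := hdlim.norm
      simp only [norm_zero] at this
      simpa [hε] using this.div_const (1 - γ')
    · exact hurec
  -- conclude entrywise
  refine tendsto_pi_nhds.mpr ?_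
  intro i
  rw [tendsto_pi_nhds]
  intro j
  rw [tendsto_iff_dist_tendsto_zero]
  apply squeeze_zero (fun k => dist_nonneg)
  · intro k
    show dist (x k i j) (xs i j) ≤ u k
    rw [Real.dist_eq]
    exact Matrix.norm_entry_le_entrywise_sup_norm (x k - xs)
  · exact hu0
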